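/- Let C be a finitely complete small category with admissible class M, and let F = {f_C : D_C → C} be a family of morphisms indexed by objects of C satisfying: for every g : C → D and every sieve S on D, {h | f_C × h ∈ g*(S)} = {h | f_D × (g∘h) ∈ S}. Then the map α_F : Ω → Ω defined by (α_F)_C(S) = {h | f_C × h ∈ S} is a natural transformation that preserves the maximal sieve, commutes with binary intersections of sieves, and is M-action preserving: (α_F)_C(S·m) = (α_F)_C(S)·m for all m ∈ M/C. Furthermore, if each f_C is idempotent in the slice C/C (f_C × f_C = f_C), then α_F is idempotent, hence a Lawvere–Tierney topology. -/
import Mathlib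


open CategoryTheory Opposite CategoryTheory.Limits

universe v u

variable {C : Type u} [Category.{v} C] [HasFiniteLimits C]

/-- An admissible class of monomorphisms on a finitely complete category `C`:
contains identities, closed under composition, and stable under pullback. -/
structure AdmissibleClass (C : Type u) [Category.{v} C] [HasFiniteLimits C] where
  cls : ∀ ⦃Y X : C⦄, (Y ⟶ X) → Prop
  mono : ∀ ⦃Y X : C⦄ (f : Y ⟶ X), cls f → Mono f
  id_mem : ∀ X : C, cls (𝟙 X)
  comp_mem : ∀ ⦃Z Y X : C⦄ (g : Z ⟶ Y) (f : Y ⟶ X), cls g → cls f → cls (g ≫ f)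
  pullback_stable : ∀ ⦃A B X : C⦄ (f : A ⟶ X) (m : B ⟶ X), cls m →
    cls (pullback.fst f m)

/-- The diagonal `f × g = f ∘ f⁻¹(g)` of the pullback of `f` and `g` over `X`,
i.e. the product of `f` and `g` in the slice over `X`. -/
noncomputable def dprod {A B X : C} (f : A ⟶ X) (g : B ⟶ X) : pullback f g ⟶ X :=
  pullback.fst f g ≫ f

/-- The action of an arrow `m : A ⟶ X` on sieves: `S·m = { h | m × h ∈ S }`. -/
noncomputable def sieveAct {X A : C} (S : Sieve X) (m : A ⟶ X) : Sieve X where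
  arrows := fun _Y h => S (pullback.fst m h ≫ m)
  downward_closed := by
    intro Y Z h hh g
    have hl : pullback.lift (pullback.fst m (g ≫ h)) (pullback.snd m (g ≫ h) ≫ g)
        (by rw [pullback.condition]; simp) ≫ pullback.fst m h
        = pullback.fst m (g ≫ h) := pullback.lift_fst _ _ _
    show S (pullback.fst m (g ≫ h) ≫ m)
    rw [← hl, Category.assoc]
    exact S.downward_closed hh _

/-- A sieve contains an arrow iff it contains another arrow, as soon as each
factors through the other over the codomain. -/
lemma sieve_iff_of_factors {X P Q : C} (S : Sieve X) (a : P ⟶ X) (b : Q ⟶ X)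
    (φ : P ⟶ Q) (ψ : Q ⟶ P) (hφ : φ ≫ b = a) (hψ : ψ ≫ a = b) : S a ↔ S b := by
  constructor
  · intro hh; rw [← hψ]; exact S.downward_closed hh ψ
  · intro hh; rw [← hφ]; exact S.downward_closed hh φ

/-- Commutativity of the diagonal action: `m × (n × h)` and `n × (m × h)` belong
to a sieve simultaneously. One direction suffices by symmetry. -/
lemma triple_aux {X A B E : C} (S : Sieve X) (m : A ⟶ X) (n : B ⟶ X) (h : E ⟶ X)
    (hs : S (pullback.fst n (pullback.fst m h ≫ m) ≫ n)) :
    S (pullback.fst m (pullback.fst n h ≫ n) ≫ m) := by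
  have cP : pullback.fst m (pullback.fst n h ≫ n) ≫ m
      = pullback.snd m (pullback.fst n h ≫ n) ≫ (pullback.fst n h ≫ n) :=
    pullback.condition
  have cnh : pullback.fst n h ≫ n = pullback.snd n h ≫ h := pullback.condition
  have w1 : pullback.fst m (pullback.fst n h ≫ n) ≫ m
      = (pullback.snd m (pullback.fst n h ≫ n) ≫ pullback.snd n h) ≫ h := by
    calc pullback.fst m (pullback.fst n h ≫ n) ≫ m
        = pullback.snd m (pullback.fst n h ≫ n) ≫ (pullback.fst n h ≫ n) := cP
      _ = pullback.snd m (pullback.fst n h ≫ n) ≫ (pullback.snd n h ≫ h) :=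
          whisker_eq _ cnh
      _ = (pullback.snd m (pullback.fst n h ≫ n) ≫ pullback.snd n h) ≫ h :=
          (Category.assoc _ _ _).symm
  set v : pullback m (pullback.fst n h ≫ n) ⟶ pullback m h :=
    pullback.lift (pullback.fst m (pullback.fst n h ≫ n))
      (pullback.snd m (pullback.fst n h ≫ n) ≫ pullback.snd n h) w1 with hv
  have w2 : (pullback.snd m (pullback.fst n h ≫ n) ≫ pullback.fst n h) ≫ n
      = v ≫ (pullback.fst m h ≫ m) := by
    calc (pullback.snd m (pullback.fst n h ≫ n) ≫ pullback.fst n h) ≫ n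
        = pullback.snd m (pullback.fst n h ≫ n) ≫ (pullback.fst n h ≫ n) :=
          Category.assoc _ _ _
      _ = pullback.fst m (pullback.fst n h ≫ n) ≫ m := cP.symm
      _ = (v ≫ pullback.fst m h) ≫ m := by rw [hv, pullback.lift_fst]
      _ = v ≫ (pullback.fst m h ≫ m) := Category.assoc _ _ _
  set φ : pullback m (pullback.fst n h ≫ n) ⟶ pullback n (pullback.fst m h ≫ m) :=
    pullback.lift (pullback.snd m (pullback.fst n h ≫ n) ≫ pullback.fst n h) v w2
    with hφ
  have key : φ ≫ (pullback.fst n (pullback.fst m h ≫ m) ≫ n)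
      = pullback.fst m (pullback.fst n h ≫ n) ≫ m := by
    calc φ ≫ (pullback.fst n (pullback.fst m h ≫ m) ≫ n)
        = (φ ≫ pullback.fst n (pullback.fst m h ≫ m)) ≫ n :=
          (Category.assoc _ _ _).symm
      _ = (pullback.snd m (pullback.fst n h ≫ n) ≫ pullback.fst n h) ≫ n := by
          rw [hφ, pullback.lift_fst]
      _ = pullback.snd m (pullback.fst n h ≫ n) ≫ (pullback.fst n h ≫ n) :=
          Category.assoc _ _ _
      _ = pullback.fst m (pullback.fst n h ≫ n) ≫ m := cP.symm
  rw [← key]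
  exact S.downward_closed hs φ

/-- given a family `f_X : D X ⟶ X` satisfying the compatibility
condition `{h | f_X × h ∈ g*(S)} = {h | f_Y × (g∘h) ∈ S}` for every `g : X ⟶ Y`,
the map `α_F(S) = S·f_X = { h | f_X × h ∈ S }` is a natural transformation `Ω ⟶ Ω`
preserving the maximal sieve, commuting with binary intersections, and `M`-action
preserving; moreover it is idempotent (hence a Lawvere–Tierney topology) whenever
each `f_X` is idempotent in the slice (`f_X × f_X = f_X`, up to isomorphism over `X`). -/
theorem alphaF_weak_topology (M : AdmissibleClass C)
    (D : C → C) (f : ∀ X : C, D X ⟶ X)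
    (hF : ∀ ⦃X Y : C⦄ (g : X ⟶ Y) (S : Sieve Y) ⦃Z : C⦄ (h : Z ⟶ X),
        S ((pullback.fst (f X) h ≫ f X) ≫ g)
          ↔ S (pullback.fst (f Y) (h ≫ g) ≫ f Y)) :
    -- naturality of `α_F`
    (∀ ⦃X Y : C⦄ (g : X ⟶ Y) (S : Sieve Y),
        sieveAct (Sieve.pullback g S) (f X) = Sieve.pullback g (sieveAct S (f Y))) ∧
    -- preserves the maximal sieve
    (∀ X : C, sieveAct (⊤ : Sieve X) (f X) = ⊤) ∧
    -- commutes with binary intersections (productive weak topology)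
    (∀ (X : C) (S T : Sieve X),
        sieveAct (S ⊓ T) (f X) = sieveAct S (f X) ⊓ sieveAct T (f X)) ∧
    -- `M`-action preserving: `α_F(S·m) = α_F(S)·m`
    (∀ (X A : C) (m : A ⟶ X), M.cls m → ∀ S : Sieve X,
        sieveAct (sieveAct S m) (f X) = sieveAct (sieveAct S (f X)) m) ∧
    -- idempotency under slice-idempotency of each `f_X`
    ((∀ X : C, ∃ e : pullback (f X) (f X) ≅ D X,
        e.hom ≫ f X = pullback.fst (f X) (f X) ≫ f X) →
      ∀ (X : C) (S : Sieve X),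
        sieveAct (sieveAct S (f X)) (f X) = sieveAct S (f X)) := by
  refine ⟨?_, ?_, ?_, ?_, ?_⟩
  · -- naturality
    intro X Y g S
    ext Z h
    exact hF g S h
  · -- top
    intro X
    ext Z h
    simp [sieveAct]
  · -- intersections
    intro X S T
    ext Z h
    simp [sieveAct]
  · -- M-action preserving
    intro X A m _hm S
    ext Z h
    show S (pullback.fst m (pullback.fst (f X) h ≫ f X) ≫ m)
        ↔ S (pullback.fst (f X) (pullback.fst m h ≫ m) ≫ f X)
    exact ⟨triple_aux S (f X) m h, triple_aux S m (f X) h⟩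
  · -- idempotency
    intro _hidem X S
    ext Z h
    show S (pullback.fst (f X) (pullback.fst (f X) h ≫ f X) ≫ f X)
        ↔ S (pullback.fst (f X) h ≫ f X)
    refine sieve_iff_of_factors S _ _
      (pullback.snd (f X) (pullback.fst (f X) h ≫ f X))
      (pullback.lift (pullback.fst (f X) h) (𝟙 _) (by simp)) ?_ ?_
    · exact pullback.condition.symm
    · rw [← Category.assoc, pullback.lift_fst]
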